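/- arXiv:0807.2303 — 2 statements merged into one kernel-verified Lean document; each statement's English description precedes it below -/
import Mathlib

section
/- A finite word w is rich if and only if every factor u of w contains exactly |u| + 1 distinct palindromic factors. -/
/-- The finset of (distinct) palindromic factors of a finite word `w`,
including the empty word. -/
def palFactors {A : Type*} [DecidableEq A] (w : List A) : Finset (List A) :=
  ((w.inits.flatMap List.tails).filter (fun u => u.reverse = u)).toFinset

/-- A finite word `w` is rich if it has exactly `|w| + 1` distinct palindromic factors. -/
def Rich {A : Type*} [DecidableEq A] (w : List A) : Prop :=
  (palFactors w).card = w.length + 1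

lemma mem_palFactors {A : Type*} [DecidableEq A] {w u : List A} :
    u ∈ palFactors w ↔ u <:+: w ∧ u.reverse = u := by
  simp only [palFactors, List.mem_toFinset, List.mem_filter, List.mem_flatMap,
    List.mem_inits, List.mem_tails, decide_eq_true_eq]
  constructor
  · rintro ⟨⟨p, hp, hu⟩, hpal⟩
    exact ⟨hu.isInfix.trans hp.isInfix, hpal⟩
  · rintro ⟨⟨s, t, h⟩, hpal⟩
    exact ⟨⟨s ++ u, ⟨t, by simpa using h⟩, ⟨s, rfl⟩⟩, hpal⟩

lemma infix_concat_cases {A : Type*} {u v : List A} {a : A}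
    (h : u <:+: v ++ [a]) : u <:+ v ++ [a] ∨ u <:+: v := by
  obtain ⟨s, t, hst⟩ := h
  rcases List.eq_nil_or_concat t with rfl | ⟨t', a', rfl⟩
  · exact Or.inl ⟨s, by simpa using hst⟩
  · right
    have h2 : (s ++ u ++ t') ++ [a'] = v ++ [a] := by
      simpa [List.concat_eq_append, List.append_assoc] using hst
    have := List.append_inj' h2 rfl
    exact ⟨s, t', by simpa [List.append_assoc] using this.1⟩

lemma palFactors_mono {A : Type*} [DecidableEq A] {u w : List A} (h : u <:+: w) :
    palFactors u ⊆ palFactors w := by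
  intro x hx
  rw [mem_palFactors] at hx ⊢
  exact ⟨hx.1.trans h, hx.2⟩

lemma palFactors_nil {A : Type*} [DecidableEq A] :
    (palFactors (A := A) []) = {[]} := by
  ext u
  simp [mem_palFactors, List.infix_nil]
  rintro rfl; rfl

lemma card_palFactors_concat_le {A : Type*} [DecidableEq A] (v : List A) (a : A) :
    (palFactors (v ++ [a])).card ≤ (palFactors v).card + 1 := by
  set w := v ++ [a] with hw
  set S := palFactors w \ palFactors v with hS
  have hsub : palFactors w ⊆ palFactors v ∪ S := by
    intro x hx
    by_cases h : x ∈ palFactors v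
    · exact Finset.mem_union_left _ h
    · exact Finset.mem_union_right _ (Finset.mem_sdiff.2 ⟨hx, h⟩)
  have hS1 : S.card ≤ 1 := by
    apply Finset.card_le_one.2
    intro p hp q hq
    rw [hS, Finset.mem_sdiff, mem_palFactors] at hp hq
    -- both p and q are palindromic suffixes of w, not factors of v
    have hsuf : ∀ x : List A, x <:+: w → x.reverse = x → x ∉ palFactors v → x <:+ w := by
      intro x hx _ hxv
      rcases infix_concat_cases hx with h | h
      · exact h
      · exact absurd (mem_palFactors.2 ⟨h, ‹x.reverse = x›⟩) hxv
    have hps : p <:+ w := hsuf p hp.1.1 hp.1.2 hp.2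
    have hqs : q <:+ w := hsuf q hq.1.1 hq.1.2 hq.2
    -- key: a shorter palindromic suffix would be a factor of v
    have key : ∀ x y : List A, x <:+ w → y <:+ w → x.reverse = x → y.reverse = y →
        x ∉ palFactors v → x.length ≤ y.length → x = y := by
      intro x y hx hy hxp hyp hxv hlen
      have hxy : x <:+ y := List.suffix_of_suffix_length_le hx hy hlen
      by_contra hne
      have hlt : x.length < y.length := by
        rcases lt_or_eq_of_le hlen with h | h
        · exact h
        · exact absurd (hxy.eq_of_length h) hne
      -- x is a prefix of y since both are palindromes
      have hpre : x <+: y := by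
        have := List.reverse_prefix.2 hxy
        rw [hxp, hyp] at this
        exact this
      obtain ⟨r, hr⟩ := hpre
      obtain ⟨s, hs⟩ := hy
      have hrne : r ≠ [] := by
        intro h; subst h; simp at hr; exact hne hr
      have : x <:+: v := by
        obtain ⟨r', a', rfl⟩ := (List.eq_nil_or_concat r).resolve_left hrne
        have h2 : (s ++ x ++ r') ++ [a'] = v ++ [a] := by
          rw [← hr] at hs
          simpa [List.concat_eq_append, List.append_assoc, hw] using hs
        have := (List.append_inj' h2 rfl).1
        exact ⟨s, r', by simpa [List.append_assoc] using this⟩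
      exact hxv (mem_palFactors.2 ⟨this, hxp⟩)
    rcases le_total p.length q.length with h | h
    · exact key p q hps hqs hp.1.2 hq.1.2 hp.2 h
    · exact (key q p hqs hps hq.1.2 hp.1.2 hq.2 h).symm
  calc (palFactors w).card ≤ (palFactors v ∪ S).card := Finset.card_le_card hsub
    _ ≤ (palFactors v).card + S.card := Finset.card_union_le _ _
    _ ≤ (palFactors v).card + 1 := by omega

lemma card_palFactors_le {A : Type*} [DecidableEq A] (w : List A) :
    (palFactors w).card ≤ w.length + 1 := by
  induction w using List.reverseRecOn with
  | nil => simp [palFactors_nil]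
  | append_singleton v a ih =>
    have := card_palFactors_concat_le v a
    simp only [List.length_append, List.length_singleton]
    omega

lemma rich_of_prefix {A : Type*} [DecidableEq A] {w p : List A}
    (hw : Rich w) (hp : p <+: w) : Rich p := by
  induction w using List.reverseRecOn with
  | nil => rwa [List.prefix_nil.1 hp]
  | append_singleton v a ih =>
    have hv : Rich v := by
      have h1 := card_palFactors_concat_le v a
      have h2 := card_palFactors_le v
      unfold Rich at hw ⊢
      simp only [List.length_append, List.length_singleton] at hw
      omega
    rcases List.prefix_concat_iff.1 hp with rfl | h
    · exact hw
    · exact ih hv h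

lemma palFactors_reverse {A : Type*} [DecidableEq A] (w : List A) :
    palFactors w.reverse = palFactors w := by
  ext u
  rw [mem_palFactors, mem_palFactors]
  constructor
  · rintro ⟨h, hpal⟩
    refine ⟨?_, hpal⟩
    rw [← List.reverse_infix, hpal] at h
    simpa using h
  · rintro ⟨h, hpal⟩
    refine ⟨?_, hpal⟩
    rw [← List.reverse_infix] at h
    simpa [hpal] using h

lemma rich_reverse {A : Type*} [DecidableEq A] {w : List A} (hw : Rich w) :
    Rich w.reverse := by
  unfold Rich at hw ⊢
  simpa [palFactors_reverse] using hw

lemma rich_of_suffix {A : Type*} [DecidableEq A] {w u : List A}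
    (hw : Rich w) (hu : u <:+ w) : Rich u := by
  have h1 : Rich w.reverse := rich_reverse hw
  have h2 : u.reverse <+: w.reverse := List.reverse_prefix.2 hu
  have h3 : Rich u.reverse := rich_of_prefix h1 h2
  simpa using rich_reverse h3

lemma rich_of_infix {A : Type*} [DecidableEq A] {w u : List A}
    (hw : Rich w) (hu : u <:+: w) : Rich u := by
  obtain ⟨s, t, h⟩ := hu
  have hpre : s ++ u <+: w := ⟨t, by simpa [List.append_assoc] using h⟩
  exact rich_of_suffix (rich_of_prefix hw hpre) ⟨s, rfl⟩

/-- A finite word `w` is rich if and only if every factor `u` of `w` contains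
exactly `|u| + 1` distinct palindromic factors. -/
theorem rich_iff_all_factors_full_palindromic_complexity {A : Type*} [DecidableEq A]
    (w : List A) :
    Rich w ↔ ∀ u : List A, u <:+: w → (palFactors u).card = u.length + 1 := by
  constructor
  · intro hw u hu
    exact rich_of_infix hw hu
  · intro h
    exact h w (List.infix_refl w)
end

section
/- A finite word w is rich if and only if the following holds: for every non-palindromic factor u of w, the longest palindromic prefix p of u and the longest palindromic suffix q of u satisfy p ≠ q and neither p nor q is a factor of the other, and any two non-palindromic factors of w having the same longest palindromic prefix and the same longest palindromic suffix are equal. -/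
set_option linter.unusedSectionVars false

def LongestPalPrefix {A : Type*} (p u : List A) : Prop :=
  p <+: u ∧ p.reverse = p ∧ ∀ p' : List A, p' <+: u → p'.reverse = p' → p'.length ≤ p.length

def LongestPalSuffix {A : Type*} (q u : List A) : Prop :=
  q <:+ u ∧ q.reverse = q ∧ ∀ q' : List A, q' <:+ u → q'.reverse = q' → q'.length ≤ q.length

namespace RichAux
open List

variable {A : Type*} [DecidableEq A]

lemma infix_iff_suffix_prefix {x w : List A} : x <:+: w ↔ ∃ t, x <:+ t ∧ t <+: w := by
  constructor
  · rintro ⟨s, t, rfl⟩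
    exact ⟨s ++ x, suffix_append s x, by simp [List.prefix_append, List.append_assoc]⟩
  · rintro ⟨t, hx, ht⟩
    exact hx.isInfix.trans ht.isInfix

lemma mem_palFactors {x w : List A} : x ∈ palFactors w ↔ x <:+: w ∧ x.reverse = x := by
  simp only [palFactors, List.mem_toFinset, List.mem_filter, List.mem_flatMap, List.mem_inits,
    List.mem_tails, decide_eq_true_eq]
  rw [infix_iff_suffix_prefix]
  tauto

lemma exists_lps (u : List A) : ∃ q, LongestPalSuffix q u := by
  have hne : (u.tails.toFinset.filter (fun q => q.reverse = q)).Nonempty := by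
    refine ⟨[], ?_⟩
    simp [List.mem_tails, List.nil_suffix]
  obtain ⟨q, hq, hmax⟩ := Finset.exists_max_image _ List.length hne
  simp only [Finset.mem_filter, List.mem_toFinset, List.mem_tails] at hq hmax
  exact ⟨q, hq.1, hq.2, fun q' h1 h2 => hmax q' ⟨h1, h2⟩⟩

noncomputable def mps (u : List A) : List A := (exists_lps u).choose

lemma mps_spec (u : List A) : LongestPalSuffix (mps u) u := (exists_lps u).choose_spec

lemma mps_suffix (u : List A) : mps u <:+ u := (mps_spec u).1
lemma mps_pal (u : List A) : (mps u).reverse = mps u := (mps_spec u).2.1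
lemma mps_max {u : List A} {q : List A} (h1 : q <:+ u) (h2 : q.reverse = q) :
    q.length ≤ (mps u).length := (mps_spec u).2.2 q h1 h2

lemma lps_eq_mps {q u : List A} (h : LongestPalSuffix q u) : q = mps u := by
  have h1 : q.length ≤ (mps u).length := mps_max h.1 h.2.1
  have h2 : (mps u).length ≤ q.length := h.2.2 _ (mps_suffix u) (mps_pal u)
  have := suffix_of_suffix_length_le h.1 (mps_suffix u) h1
  exact this.eq_of_length (le_antisymm h1 h2)

noncomputable def mpp (u : List A) : List A := mps u.reverse

lemma mpp_pal (u : List A) : (mpp u).reverse = mpp u := mps_pal _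

lemma mpp_prefix (u : List A) : mpp u <+: u := by
  have h : (mps u.reverse).reverse <+: u.reverse.reverse := reverse_prefix.mpr (mps_suffix u.reverse)
  rw [List.reverse_reverse, mps_pal] at h
  exact h

lemma mpp_spec (u : List A) : LongestPalPrefix (mpp u) u := by
  refine ⟨mpp_prefix u, mpp_pal u, fun p' h1 h2 => ?_⟩
  have : p' <:+ u.reverse := by
    rw [← h2]
    exact List.reverse_suffix.mpr h1
  exact mps_max this h2

lemma lpp_eq_mpp {p u : List A} (h : LongestPalPrefix p u) : p = mpp u := by
  have h1 : p.length ≤ (mpp u).length := (mpp_spec u).2.2 p h.1 h.2.1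
  have h2 : (mpp u).length ≤ p.length := h.2.2 _ (mpp_prefix u) (mpp_pal u)
  have := prefix_of_prefix_length_le h.1 (mpp_prefix u) h1
  exact this.eq_of_length (le_antisymm h1 h2)

lemma mps_reverse (u : List A) : mps u.reverse = mpp u := rfl

lemma mpp_reverse (u : List A) : mpp u.reverse = mps u := by
  simp [mpp, List.reverse_reverse]


/-! ### small list lemmas -/

lemma prefix_dropLast_of_proper {t u : List A} (h : t <+: u) (hne : t ≠ u) :
    t <+: u.dropLast := by
  obtain ⟨r, rfl⟩ := h
  have hr : r ≠ [] := by rintro rfl; simp at hne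
  rw [List.dropLast_append_of_ne_nil hr]
  exact List.prefix_append _ _

lemma suffix_tail_of_proper {t u : List A} (h : t <:+ u) (hne : t ≠ u) :
    t <:+ u.tail := by
  obtain ⟨r, rfl⟩ := h
  have hr : r ≠ [] := by rintro rfl; simp at hne
  obtain ⟨a, r, rfl⟩ := List.exists_cons_of_ne_nil hr
  simpa using (List.suffix_append r t).trans (List.suffix_refl _)

lemma infix_cons_cases {u w : List A} (h : u <:+: w) : u <+: w ∨ u <:+: w.tail := by
  cases w with
  | nil => left; simpa using h
  | cons a t =>
    rcases List.infix_cons_iff.mp h with h | h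
    · exact Or.inl h
    · exact Or.inr h

lemma reverse_dropLast (u : List A) : u.reverse.dropLast = u.tail.reverse := by
  cases u with
  | nil => simp
  | cons a t => simp [List.reverse_cons, List.dropLast_concat]

lemma tail_reverse (w : List A) : w.reverse.tail = w.dropLast.reverse := by
  induction w using List.reverseRecOn with
  | nil => simp
  | append_singleton v a _ => simp [List.dropLast_concat]

lemma infix_snoc_cases {u w : List A} (h : u <:+: w) : u <:+ w ∨ u <:+: w.dropLast := by
  have h' : u.reverse <:+: w.reverse := List.reverse_infix.mpr h
  rcases infix_cons_cases h' with h' | h'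
  · left
    have := List.reverse_prefix.mp (by simpa using h')
    simpa using this
  · right
    rw [← List.reverse_infix, ← tail_reverse]
    exact h' 

lemma dropLast_suffix_dropLast {s w : List A} (h : s <:+ w) (hs : s ≠ []) :
    s.dropLast <:+ w.dropLast := by
  obtain ⟨z, rfl⟩ := h
  rw [List.dropLast_append_of_ne_nil hs]
  exact ⟨z, rfl⟩

lemma tail_prefix_tail {r w : List A} (h : r <+: w) (hr : r ≠ []) :
    r.tail <+: w.tail := by
  obtain ⟨z, rfl⟩ := h
  obtain ⟨a, r, rfl⟩ := List.exists_cons_of_ne_nil hr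
  simpa using List.prefix_append _ z

lemma suffix_pal_prefix {x q : List A} (hx : x <:+ q) (hq : q.reverse = q) : x.reverse <+: q := by
  rw [← hq]
  exact List.reverse_prefix.mpr hx

lemma prefix_pal_suffix {x q : List A} (hx : x <+: q) (hq : q.reverse = q) : x.reverse <:+ q := by
  rw [← hq]
  exact List.reverse_suffix.mpr hx

/-! ### counting: Rich ↔ condition C -/

lemma mps_ne_nil {u : List A} (h : u ≠ []) : mps u ≠ [] := by
  obtain ⟨y, b, rfl⟩ : ∃ y : List A, ∃ b : A, u = y ++ [b] := by
    rcases u.eq_nil_or_concat with rfl | ⟨y, b, hu⟩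
    · exact absurd rfl h
    · exact ⟨y, b, by simpa using hu⟩
  have hb : ([b] : List A) <:+ y ++ [b] := ⟨y, rfl⟩
  have hlen : ([b] : List A).length ≤ (mps (y ++ [b])).length := mps_max hb rfl
  intro h0; rw [h0] at hlen; simp at hlen

lemma palFactors_mono {v w : List A} (h : v <:+: w) : palFactors v ⊆ palFactors w := by
  intro x hx
  rw [mem_palFactors] at *
  exact ⟨hx.1.trans h, hx.2⟩

lemma mps_mem_palFactors (w : List A) : mps w ∈ palFactors w :=
  mem_palFactors.mpr ⟨(mps_suffix w).isInfix, mps_pal w⟩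

lemma palFactors_snoc (v : List A) (a : A) :
    palFactors (v ++ [a]) = insert (mps (v ++ [a])) (palFactors v) := by
  apply Finset.Subset.antisymm
  · intro x hx
    rw [mem_palFactors] at hx
    obtain ⟨hinf, hpal⟩ := hx
    rcases infix_snoc_cases hinf with hsuf | hinf'
    · -- x is a palindromic suffix of v ++ [a]
      rcases eq_or_ne x (mps (v ++ [a])) with rfl | hne
      · exact Finset.mem_insert_self _ _
      · have hlen : x.length ≤ (mps (v ++ [a])).length := mps_max hsuf hpal
        have hxs : x <:+ mps (v ++ [a]) :=
          suffix_of_suffix_length_le hsuf (mps_suffix _) hlen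
        have hxp : x <+: mps (v ++ [a]) := by
          have := suffix_pal_prefix hxs (mps_pal _)
          rwa [hpal] at this
        have hnem : x ≠ mps (v ++ [a]) := hne
        have h1 : x <+: (mps (v ++ [a])).dropLast := prefix_dropLast_of_proper hxp hnem
        have hmne : mps (v ++ [a]) ≠ [] := by
          intro h0
          apply hnem
          rw [h0]
          have := hxs
          rw [h0] at this
          exact List.suffix_nil.mp this
        have h2 : (mps (v ++ [a])).dropLast <:+ v := by
          have := dropLast_suffix_dropLast (mps_suffix (v ++ [a])) hmne
          rwa [List.dropLast_concat] at this
        refine Finset.mem_insert_of_mem (mem_palFactors.mpr ⟨?_, hpal⟩)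
        exact h1.isInfix.trans h2.isInfix
    · rw [List.dropLast_concat] at hinf'
      exact Finset.mem_insert_of_mem (mem_palFactors.mpr ⟨hinf', hpal⟩)
  · intro x hx
    rcases Finset.mem_insert.mp hx with rfl | hx
    · exact mps_mem_palFactors _
    · exact palFactors_mono (List.prefix_append v [a]).isInfix hx

lemma palFactors_nil : palFactors ([] : List A) = {[]} := by
  ext x
  rw [mem_palFactors]
  simp only [Finset.mem_singleton]
  constructor
  · rintro ⟨h, -⟩; simpa using List.eq_nil_of_infix_nil h
  · rintro rfl; exact ⟨List.infix_refl _, rfl⟩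

lemma card_palFactors_le (w : List A) : (palFactors w).card ≤ w.length + 1 := by
  induction w using List.reverseRecOn with
  | nil => simp [palFactors_nil]
  | append_singleton v a ih =>
    rw [palFactors_snoc]
    calc (insert (mps (v ++ [a])) (palFactors v)).card ≤ (palFactors v).card + 1 :=
          Finset.card_insert_le _ _
      _ ≤ v.length + 1 + 1 := by omega
      _ = (v ++ [a]).length + 1 := by simp

lemma rich_snoc_iff (v : List A) (a : A) :
    Rich (v ++ [a]) ↔ Rich v ∧ ¬ mps (v ++ [a]) <:+: v := by
  have hkey : mps (v ++ [a]) ∈ palFactors v ↔ mps (v ++ [a]) <:+: v := by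
    rw [mem_palFactors]
    exact ⟨fun h => h.1, fun h => ⟨h, mps_pal _⟩⟩
  unfold Rich
  rw [palFactors_snoc]
  constructor
  · intro h
    by_cases hmem : mps (v ++ [a]) ∈ palFactors v
    · exfalso
      rw [Finset.insert_eq_self.mpr hmem] at h
      have := card_palFactors_le v
      simp only [List.length_append, List.length_singleton] at h
      omega
    · rw [Finset.card_insert_of_notMem hmem] at h
      simp only [List.length_append, List.length_singleton] at h
      constructor
      · omega
      · rwa [hkey] at hmem
  · rintro ⟨h1, h2⟩
    rw [Finset.card_insert_of_notMem (fun hm => h2 (hkey.mp hm)), h1]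
    simp

def CondC (w : List A) : Prop :=
  ∀ t : List A, t <+: w → t ≠ [] → ¬ mps t <:+: t.dropLast

lemma rich_iff_condC (w : List A) : Rich w ↔ CondC w := by
  induction w using List.reverseRecOn with
  | nil =>
    constructor
    · intro _ t ht htne
      exact absurd (List.prefix_nil.mp ht) htne
    · intro _
      simp [Rich, palFactors_nil]
  | append_singleton v a ih =>
    rw [rich_snoc_iff, ih]
    constructor
    · rintro ⟨hC, hnew⟩ t ht htne
      rcases List.prefix_concat_iff.mp ht with rfl | ht'
      · rwa [List.dropLast_concat]
      · exact hC t ht' htne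
    · intro h
      refine ⟨fun t ht htne => h t (ht.trans (List.prefix_append v [a])) htne, ?_⟩
      have := h (v ++ [a]) (List.prefix_refl _) (by simp)
      rwa [List.dropLast_concat] at this


/-! ### closure properties of Rich -/

lemma palFactors_reverse (w : List A) : palFactors w.reverse = palFactors w := by
  ext x
  rw [mem_palFactors, mem_palFactors]
  constructor
  · rintro ⟨h, hp⟩
    refine ⟨?_, hp⟩
    have : x.reverse <:+: w.reverse.reverse := List.reverse_infix.mpr h
    rwa [List.reverse_reverse, hp] at this
  · rintro ⟨h, hp⟩
    refine ⟨?_, hp⟩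
    rw [← hp]
    exact List.reverse_infix.mpr h

lemma rich_reverse {w : List A} (h : Rich w) : Rich w.reverse := by
  unfold Rich at *
  rwa [palFactors_reverse, List.length_reverse]

lemma rich_prefix {v w : List A} (h : Rich w) (hv : v <+: w) : Rich v := by
  rw [rich_iff_condC] at *
  exact fun t ht htne => h t (ht.trans hv) htne

lemma rich_suffix {v w : List A} (h : Rich w) (hv : v <:+ w) : Rich v := by
  have := rich_prefix (rich_reverse h) (List.reverse_prefix.mpr hv)
  have h2 := rich_reverse this
  rwa [List.reverse_reverse] at h2

lemma rich_infix {v w : List A} (h : Rich w) (hv : v <:+: w) : Rich v := by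
  obtain ⟨t, h1, h2⟩ := infix_iff_suffix_prefix.mp hv
  exact rich_suffix (rich_prefix h h2) h1

/-! ### unioccurrence of longest palindromic suffix / prefix in rich words -/

lemma uniq_mps {w u : List A} (h : Rich w) (hu : u <:+: w) (hune : u ≠ []) :
    ¬ mps u <:+: u.dropLast := by
  have hru : Rich u := rich_infix h hu
  rw [rich_iff_condC] at hru
  exact hru u (List.prefix_refl u) hune

lemma uniq_mpp {w u : List A} (h : Rich w) (hu : u <:+: w) (hune : u ≠ []) :
    ¬ mpp u <:+: u.tail := by
  have hrev : ¬ mps u.reverse <:+: u.reverse.dropLast :=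
    uniq_mps (rich_reverse h) (List.reverse_infix.mpr hu) (by simpa using hune)
  rw [mps_reverse, reverse_dropLast] at hrev
  intro hc
  apply hrev
  rw [← mpp_pal]
  exact List.reverse_infix.mpr hc

lemma nonpal_ne_nil {u : List A} (h : u.reverse ≠ u) : u ≠ [] := by
  rintro rfl; simp at h

/-! ### property (A) -/

lemma lemA {w u : List A} (h : Rich w) (hu : u <:+: w) (hnp : u.reverse ≠ u) :
    mpp u ≠ mps u ∧ ¬ mpp u <:+: mps u ∧ ¬ mps u <:+: mpp u := by
  have hune : u ≠ [] := nonpal_ne_nil hnp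
  have hups := uniq_mps h hu hune
  have hupp := uniq_mpp h hu hune
  have hppu : mpp u ≠ u := fun hc => hnp (by rw [← hc]; exact mpp_pal u)
  have hpsu : mps u ≠ u := fun hc => hnp (by rw [← hc]; exact mps_pal u)
  refine ⟨?_, ?_, ?_⟩
  · intro hc
    apply hups
    have : mps u <+: u := hc ▸ mpp_prefix u
    exact (prefix_dropLast_of_proper this hpsu).isInfix
  · intro hc
    apply hupp
    exact hc.trans (suffix_tail_of_proper (mps_suffix u) hpsu).isInfix
  · intro hc
    apply hups
    exact hc.trans (prefix_dropLast_of_proper (mpp_prefix u) hppu).isInfix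


/-! ### property (B): uniqueness -/

lemma mem_tail_of_not_dropLast {u w : List A} (hu : u <:+: w)
    (hud : ¬ u <:+: w.dropLast) (huw : u ≠ w) : u <:+: w.tail := by
  rcases infix_cons_cases hu with h | h
  · exact absurd (prefix_dropLast_of_proper h huw).isInfix hud
  · exact h

lemma mem_dropLast_of_not_tail {u w : List A} (hu : u <:+: w)
    (hut : ¬ u <:+: w.tail) (huw : u ≠ w) : u <:+: w.dropLast := by
  rcases infix_snoc_cases hu with h | h
  · exact absurd (suffix_tail_of_proper h huw).isInfix hut
  · exact h

lemma keyB_eq {w v : List A} (h : Rich w) (hv : v <:+: w) (hvw : v ≠ w)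
    (hnw : w.reverse ≠ w) (hpp : mpp w = mpp v) (hss : mps w = mps v) : False := by
  have hwne : w ≠ [] := nonpal_ne_nil hnw
  rcases infix_cons_cases hv with hvp | hvt
  · have h1 : v <+: w.dropLast := prefix_dropLast_of_proper hvp hvw
    refine uniq_mps h (List.infix_refl w) hwne ?_
    rw [hss]
    exact (mps_suffix v).isInfix.trans h1.isInfix
  · refine uniq_mpp h (List.infix_refl w) hwne ?_
    rw [hpp]
    exact (mpp_prefix v).isInfix.trans hvt

lemma keyB_main {w u v : List A} (hrich : Rich w)
    (iht : ∀ u' v' : List A, u' <:+: w.tail → v' <:+: w.tail → u'.reverse ≠ u' →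
      v'.reverse ≠ v' → mpp u' = mpp v' → mps u' = mps v' → u' = v')
    (hu : u <:+: w) (hv : v <:+: w) (hnu : u.reverse ≠ u) (hnv : v.reverse ≠ v)
    (hpp : mpp u = mpp v) (hss : mps u = mps v) (hne : u ≠ v)
    (hud : ¬ u <:+: w.dropLast) (hvt : ¬ v <:+: w.tail)
    (huw : u ≠ w) (hvw : v ≠ w) : False := by
  have hune : u ≠ [] := nonpal_ne_nil hnu
  have hvne : v ≠ [] := nonpal_ne_nil hnv
  have hwne : w ≠ [] := fun h0 => hune (List.eq_nil_of_infix_nil (h0 ▸ hu))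
  have husuf : u <:+ w := (infix_snoc_cases hu).resolve_right hud
  have hvpre : v <+: w := (infix_cons_cases hv).resolve_right hvt
  have hut : u <:+: w.tail := mem_tail_of_not_dropLast hu hud huw
  have hvd : v <:+: w.dropLast := (prefix_dropLast_of_proper hvpre hvw).isInfix
  have hq_suf_w : mps u <:+ w := (mps_suffix u).trans husuf
  -- |u| < |mps w|
  have hus : u.length < (mps w).length := by
    by_contra hle
    push_neg at hle
    have hsu : mps w <:+ u := suffix_of_suffix_length_le (mps_suffix w) husuf hle
    have h1 : (mps w).length ≤ (mps u).length := mps_max hsu (mps_pal w)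
    have h2 : (mps u).length ≤ (mps w).length := mps_max hq_suf_w (mps_pal u)
    have hqs : mps u <:+ mps w := suffix_of_suffix_length_le hq_suf_w (mps_suffix w) h2
    have heq : mps u = mps w := hqs.eq_of_length (le_antisymm h2 h1)
    refine uniq_mps hrich (List.infix_refl w) hwne ?_
    rw [← heq, hss]
    exact (mps_suffix v).isInfix.trans hvd
  -- |v| < |mpp w|
  have hp_pre_w : mpp u <+: w := by
    rw [hpp]; exact (mpp_prefix v).trans hvpre
  have hvr : v.length < (mpp w).length := by
    by_contra hle
    push_neg at hle
    have hrv : mpp w <+: v := prefix_of_prefix_length_le (mpp_prefix w) hvpre hle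
    have h1 : (mpp w).length ≤ (mpp v).length := (mpp_spec v).2.2 _ hrv (mpp_pal w)
    have h2 : (mpp u).length ≤ (mpp w).length := (mpp_spec w).2.2 _ hp_pre_w (mpp_pal u)
    rw [hpp] at h2
    have hps : mpp v <+: mpp w :=
      prefix_of_prefix_length_le ((mpp_prefix v).trans hvpre) (mpp_prefix w) h2
    have heq : mpp v = mpp w := hps.eq_of_length (le_antisymm h2 h1)
    refine uniq_mpp hrich (List.infix_refl w) hwne ?_
    rw [← heq, ← hpp]
    exact (mpp_prefix u).isInfix.trans hut
  -- u.reverse is a prefix of w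
  have hsne : mps w ≠ [] := by
    intro h0
    rw [h0] at hus
    simp at hus
  have husufs : u <:+ mps w := suffix_of_suffix_length_le husuf (mps_suffix w) hus.le
  have hurev_pre : u.reverse <+: mps w := suffix_pal_prefix husufs (mps_pal w)
  have hurev_w : u.reverse <:+: w := hurev_pre.isInfix.trans (mps_suffix w).isInfix
  have hrne : mpp w ≠ [] := by
    intro h0
    rw [h0] at hvr
    simp at hvr
  have hvpre_r : v <+: mpp w := prefix_of_prefix_length_le hvpre (mpp_prefix w) hvr.le
  have hvrev_suf : v.reverse <:+ mpp w := prefix_pal_suffix hvpre_r (mpp_pal w)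
  have hvrev_ne : v.reverse ≠ mpp w := by
    intro hc
    have := congrArg List.length hc
    simp only [List.length_reverse] at this
    omega
  have h8a : v.reverse <:+ (mpp w).tail := suffix_tail_of_proper hvrev_suf hvrev_ne
  have h8b : (mpp w).tail <+: w.tail := tail_prefix_tail (mpp_prefix w) hrne
  have hvrev_t : v.reverse <:+: w.tail := h8a.isInfix.trans h8b.isInfix
  have hnur : u.reverse.reverse ≠ u.reverse := by
    rw [List.reverse_reverse]; exact Ne.symm hnu
  have hnvr : v.reverse.reverse ≠ v.reverse := by
    rw [List.reverse_reverse]; exact Ne.symm hnv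
  have hurev_nt : ¬ u.reverse <:+: w.tail := by
    intro hc
    apply hne
    have := iht u.reverse v.reverse hc hvrev_t hnur hnvr
      (by rw [mpp_reverse, mpp_reverse]; exact hss)
      (by rw [mps_reverse, mps_reverse]; exact hpp)
    exact List.reverse_injective this
  have hurev_pw : u.reverse <+: w := (infix_cons_cases hurev_w).resolve_right hurev_nt
  have hq_pre_w : mps u <+: w := by
    have h1 : mpp u.reverse <+: u.reverse := mpp_prefix _
    rw [mpp_reverse] at h1
    exact h1.trans hurev_pw
  obtain ⟨-, hA1, hA2⟩ := lemA hrich hu hnu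
  rcases le_total (mpp u).length (mps u).length with hl | hl
  · exact hA1 (prefix_of_prefix_length_le hp_pre_w hq_pre_w hl).isInfix
  · exact hA2 (prefix_of_prefix_length_le hq_pre_w hp_pre_w hl).isInfix

lemma keyB : ∀ (n : ℕ) (w : List A), w.length < n → Rich w →
    ∀ u v : List A, u <:+: w → v <:+: w → u.reverse ≠ u → v.reverse ≠ v →
    mpp u = mpp v → mps u = mps v → u = v := by
  intro n
  induction n with
  | zero => intro w hw; omega
  | succ n ih =>
    intro w hw hrich u v hu hv hnu hnv hpp hss
    by_contra hne
    have hune : u ≠ [] := nonpal_ne_nil hnu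
    have hwne : w ≠ [] := fun h0 => hune (List.eq_nil_of_infix_nil (h0 ▸ hu))
    have hwpos : 0 < w.length := List.length_pos_iff.mpr hwne
    have hld : w.dropLast.length < n := by
      rw [List.length_dropLast]; omega
    have hlt : w.tail.length < n := by
      rw [List.length_tail]; omega
    have ihd := ih w.dropLast hld (rich_prefix hrich (List.dropLast_prefix w))
    have iht := ih w.tail hlt (rich_suffix hrich (List.tail_suffix w))
    -- rule out u = w and v = w
    by_cases huw : u = w
    · subst huw
      have hvw : v ≠ u := fun h0 => hne h0.symm
      exact keyB_eq hrich hv hvw hnu hpp hss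
    by_cases hvw : v = w
    · subst hvw
      exact keyB_eq hrich hu huw hnv hpp.symm hss.symm
    -- not both in dropLast, not both in tail
    have hd : ¬ u <:+: w.dropLast ∨ ¬ v <:+: w.dropLast := by
      by_contra hc
      push_neg at hc
      exact hne (ihd u v hc.1 hc.2 hnu hnv hpp hss)
    have ht : ¬ u <:+: w.tail ∨ ¬ v <:+: w.tail := by
      by_contra hc
      push_neg at hc
      exact hne (iht u v hc.1 hc.2 hnu hnv hpp hss)
    rcases hd with hPu | hPv <;> rcases ht with hQu | hQv
    · exact hPu (mem_dropLast_of_not_tail hu hQu huw)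
    · exact keyB_main hrich iht hu hv hnu hnv hpp hss hne hPu hQv huw hvw
    · exact keyB_main hrich iht hv hu hnv hnu hpp.symm hss.symm (Ne.symm hne) hPv hQu hvw huw
    · exact hPv (mem_dropLast_of_not_tail hv hQv hvw)


/-! ### condition (A) implies condition C -/

lemma condC_of_A {w : List A}
    (h1 : ∀ u p q : List A, u <:+: w → u.reverse ≠ u →
      LongestPalPrefix p u → LongestPalSuffix q u →
      p ≠ q ∧ ¬ p <:+: q ∧ ¬ q <:+: p) :
    CondC w := by
  intro t ht htne hq
  obtain ⟨y, b, rfl⟩ : ∃ y : List A, ∃ b : A, t = y ++ [b] := by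
    rcases t.eq_nil_or_concat with rfl | ⟨y, b, hy⟩
    · exact absurd rfl htne
    · exact ⟨y, b, by simpa using hy⟩
  rw [List.dropLast_concat] at hq
  obtain ⟨z₁, z₂, hz⟩ := hq
  set m := mps (y ++ [b]) with hm
  set u : List A := m ++ (z₂ ++ [b]) with hu_def
  have husuf : u <:+ y ++ [b] := ⟨z₁, by rw [← hz]; simp [hu_def]⟩
  have hupre_q : m <+: u := ⟨z₂ ++ [b], rfl⟩
  have hlen : m.length < u.length := by simp [hu_def]
  have hq_suf_u : m <:+ u := suffix_of_suffix_length_le (mps_suffix _) husuf hlen.le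
  have hnu : u.reverse ≠ u := by
    intro hpalu
    have h := mps_max husuf hpalu
    rw [← hm] at h
    omega
  have hu_inf_w : u <:+: w := husuf.isInfix.trans ht.isInfix
  obtain ⟨-, -, hA3⟩ := h1 u (mpp u) (mps u) hu_inf_w hnu (mpp_spec u) (mps_spec u)
  apply hA3
  have e1a : (mps u).length ≤ m.length :=
    mps_max ((mps_suffix u).trans husuf) (mps_pal u)
  have e1b : m.length ≤ (mps u).length := mps_max hq_suf_u (mps_pal _)
  have e2 : mps u = m :=
    (suffix_of_suffix_length_le (mps_suffix u) hq_suf_u e1a).eq_of_length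
      (le_antisymm e1a e1b)
  rw [e2]
  have h3 : m.length ≤ (mpp u).length := (mpp_spec u).2.2 _ hupre_q (mps_pal _)
  exact (prefix_of_prefix_length_le hupre_q (mpp_prefix u) h3).isInfix

end RichAux

open RichAux in
/-- A finite word `w` is rich if and only if: for every non-palindromic factor `u`
of `w`, the longest palindromic prefix `p` and the longest palindromic suffix `q`
of `u` satisfy `p ≠ q` and neither is a factor of the other, and any two
non-palindromic factors of `w` having the same longest palindromic prefix and the
same longest palindromic suffix are equal. -/
theorem rich_iff_unique_pal_prefix_suffix_determination {A : Type*} [DecidableEq A]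
    (w : List A) :
    Rich w ↔
      ((∀ u p q : List A, u <:+: w → u.reverse ≠ u →
          LongestPalPrefix p u → LongestPalSuffix q u →
          p ≠ q ∧ ¬ p <:+: q ∧ ¬ q <:+: p) ∧
       (∀ u v p q : List A, u <:+: w → v <:+: w → u.reverse ≠ u → v.reverse ≠ v →
          LongestPalPrefix p u → LongestPalPrefix p v →
          LongestPalSuffix q u → LongestPalSuffix q v → u = v)) := by
  constructor
  · intro hrich
    constructor
    · intro u p q hu hnu hp hq
      obtain rfl := lpp_eq_mpp hp
      obtain rfl := lps_eq_mps hq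
      exact lemA hrich hu hnu
    · intro u v p q hu hv hnu hnv hpu hpv hqu hqv
      exact keyB (w.length + 1) w (by omega) hrich u v hu hv hnu hnv
        ((lpp_eq_mpp hpu).symm.trans (lpp_eq_mpp hpv))
        ((lps_eq_mps hqu).symm.trans (lps_eq_mps hqv))
  · rintro ⟨h1, -⟩
    rw [rich_iff_condC]
    exact condC_of_A h1
end
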